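/- Let p be an odd prime and (V,Q) a nondegenerate quadratic space over ℚ_p of dimension n that admits an almost self-dual lattice Λ̄ (i.e. Λ̄ ⊆ Λ̄^∨ and length_{ℤ_p}(Λ̄^∨/Λ̄) = 1). Then there exists a ℚ_p-basis x₁,…,x_n of V and units a₁,…,a_n ∈ ℤ_p^× such that Λ̄ = ℤ_p x₁ ⊕ ⋯ ⊕ ℤ_p x_n and the Gram matrix of the associated bilinear form with respect to this basis is the diagonal matrix diag(p·a₁, a₂, a₃, …, a_n). -/

import Mathlib

namespace Stmt2Aux
open Submodule QuadraticMap Module Set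

universe u

variable {p : ℕ} [Fact p.Prime]


theorem zsmul_q {V : Type*} [AddCommGroup V] [Module ℚ_[p] V] [Module ℤ_[p] V]
    [IsScalarTower ℤ_[p] ℚ_[p] V] (z : ℤ_[p]) (v : V) : (z : ℚ_[p]) • v = z • v := by
  rw [← PadicInt.algebraMap_apply, algebraMap_smul]

theorem pa_noZero {V : Type*} [AddCommGroup V] [Module ℚ_[p] V] [Module ℤ_[p] V]
    [IsScalarTower ℤ_[p] ℚ_[p] V] : NoZeroSMulDivisors ℤ_[p] V := by
  constructor
  intro c x h
  rcases eq_or_ne c 0 with rfl | hc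
  · exact Or.inl rfl
  · right
    have h' : (c : ℚ_[p]) • x = 0 := by rw [zsmul_q]; exact h
    have hc' : (c : ℚ_[p]) ≠ 0 := PadicInt.coe_ne_zero.mpr hc
    exact (smul_eq_zero.mp h').resolve_left hc'

theorem latticeBasis {V : Type*} [AddCommGroup V] [Module ℚ_[p] V] [Module ℤ_[p] V]
    [IsScalarTower ℤ_[p] ℚ_[p] V] [FiniteDimensional ℚ_[p] V] {m : ℕ}
    (hdim : Module.finrank ℚ_[p] V = m)
    (Q : QuadraticForm ℚ_[p] V) (hQ : (QuadraticMap.polarBilin Q).Nondegenerate)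
    (Λ : Submodule ℤ_[p] V)
    (hfull : Submodule.span ℚ_[p] (Λ : Set V) = ⊤)
    (hself : ∀ v ∈ Λ, ∀ w ∈ Λ, ‖QuadraticMap.polar Q v w‖ ≤ 1) :
    ∃ cb : Basis (Fin m) ℚ_[p] V, (∀ i, cb i ∈ Λ) ∧
      Λ = Submodule.span ℤ_[p] (Set.range ⇑cb) ∧
      (∀ w : V, w ∈ Λ ↔ ∀ i, ‖cb.repr w i‖ ≤ 1) := by
  classical
  haveI : NoZeroSMulDivisors ℤ_[p] V := pa_noZero
  obtain ⟨s, hsΛ, hspan, hli⟩ := exists_linearIndependent ℚ_[p] (Λ : Set V)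
  rw [hfull] at hspan
  haveI : Finite s := hli.finite
  haveI : Fintype s := Fintype.ofFinite s
  let by' : Basis s ℚ_[p] V := Basis.mk hli (by rw [Subtype.range_coe, hspan])
  let d := LinearMap.BilinForm.dualBasis (QuadraticMap.polarBilin Q) hQ by'
  set M : Submodule ℤ_[p] V := Submodule.span ℤ_[p] (Set.range ⇑d) with hM
  have hΛd : Λ ≤ M := by
    intro w hw
    have hrep : ∀ i : s, ‖d.repr w i‖ ≤ 1 := by
      intro i
      rw [LinearMap.BilinForm.dualBasis_repr_apply]
      have hbi : by' i ∈ Λ := by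
        have h1 : (by' i : V) = (i : V) := Basis.mk_apply _ _ _
        rw [h1]; exact hsΛ i.2
      exact hself w hw _ hbi
    rw [← Basis.sum_repr d w]
    refine Submodule.sum_mem _ (fun i _ => ?_)
    obtain ⟨z, hz⟩ : ∃ z : ℤ_[p], (z : ℚ_[p]) = d.repr w i := ⟨⟨_, hrep i⟩, rfl⟩
    rw [← hz, zsmul_q]
    exact Submodule.smul_mem _ _ (Submodule.subset_span ⟨i, rfl⟩)
  -- Λ is finitely generated
  haveI hMfin : Module.Finite ℤ_[p] M :=
    Module.Finite.iff_fg.mpr (Submodule.fg_span (Set.finite_range _))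
  haveI : IsNoetherian ℤ_[p] M := isNoetherian_of_isNoetherianRing_of_finite ℤ_[p] M
  have hΛfg : Λ.FG := by
    have h1 : (Submodule.comap M.subtype Λ).FG := IsNoetherian.noetherian _
    have h2 := Submodule.FG.map M.subtype h1
    rwa [Submodule.map_comap_subtype, inf_eq_right.mpr hΛd] at h2
  haveI : Module.Finite ℤ_[p] Λ := Module.Finite.iff_fg.mpr hΛfg
  haveI : Module.Free ℤ_[p] Λ := Module.free_of_finite_type_torsion_free'
  let ι := Module.Free.ChooseBasisIndex ℤ_[p] Λ
  let bZ : Basis ι ℤ_[p] Λ := Module.Free.chooseBasis ℤ_[p] Λ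
  let bV : ι → V := (Λ.subtype : Λ →ₗ[ℤ_[p]] V) ∘ bZ
  have hliZ : LinearIndependent ℤ_[p] bV :=
    bZ.linearIndependent.map' _ (Submodule.ker_subtype Λ)
  have hliQ : LinearIndependent ℚ_[p] bV := (LinearIndependent.iff_fractionRing ℤ_[p] ℚ_[p]).mp hliZ
  have hΛspan : Λ = Submodule.span ℤ_[p] (Set.range bV) := by
    have h1 : Submodule.map (Λ.subtype : Λ →ₗ[ℤ_[p]] V) (Submodule.span ℤ_[p] (Set.range ⇑bZ))
        = Submodule.span ℤ_[p] (Set.range bV) := by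
      rw [Submodule.map_span]
      congr 1
      rw [← Set.range_comp]
    rw [← h1, Basis.span_eq]
    exact (Submodule.map_subtype_top Λ).symm
  have hspanQ : Submodule.span ℚ_[p] (Set.range bV) = ⊤ := by
    rw [← top_le_iff, ← hfull, Submodule.span_le]
    intro w hw
    have : w ∈ Submodule.span ℤ_[p] (Set.range bV) := by rw [← hΛspan]; exact hw
    exact Submodule.span_le_restrictScalars ℤ_[p] ℚ_[p] (Set.range bV) this
  -- index has cardinality m
  haveI : Fintype ι := inferInstance
  let cB : Basis ι ℚ_[p] V := Basis.mk hliQ (by rw [hspanQ])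
  have hcard : Fintype.card ι = m := by
    rw [← hdim, Module.finrank_eq_card_basis cB]
  let e : ι ≃ Fin m := Fintype.equivFinOfCardEq hcard
  let cb : Basis (Fin m) ℚ_[p] V := cB.reindex e
  have hcb : ∀ i, cb i = bV (e.symm i) := fun i => by
    rw [Basis.reindex_apply]; exact Basis.mk_apply _ _ _
  have hcbrange : Set.range ⇑cb = Set.range bV := by
    have hcB : ⇑cB = bV := Basis.coe_mk _ _
    rw [show ⇑cb = ⇑(cB.reindex e) from rfl, Basis.range_reindex, hcB]
  have hmem : ∀ i, cb i ∈ Λ := by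
    intro i; rw [hcb]; exact (bZ (e.symm i)).2
  have hΛcb : Λ = Submodule.span ℤ_[p] (Set.range ⇑cb) := by rw [hcbrange, hΛspan]
  refine ⟨cb, hmem, hΛcb, fun w => ⟨fun hw i => ?_, fun h => ?_⟩⟩
  · -- coords of lattice elements are integral
    rw [hΛcb] at hw
    obtain ⟨c, hc⟩ := (mem_span_range_iff_exists_fun ℤ_[p]).mp hw
    have hw' : ∑ j, ((c j : ℚ_[p])) • cb j = w := by
      rw [← hc]; exact Finset.sum_congr rfl fun j _ => zsmul_q _ _
    have hr : ⇑(cb.repr w) = fun j => ((c j : ℚ_[p])) := by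
      rw [← hw']; exact Basis.repr_sum_self cb _
    rw [hr]
    exact (c i).2
  · rw [← Basis.sum_repr cb w]
    rw [hΛcb]
    refine Submodule.sum_mem _ (fun i _ => ?_)
    obtain ⟨z, hz⟩ : ∃ z : ℤ_[p], (z : ℚ_[p]) = cb.repr w i := ⟨⟨_, h i⟩, rfl⟩
    rw [← hz, zsmul_q]
    exact Submodule.smul_mem _ _ (Submodule.subset_span ⟨i, rfl⟩)

theorem unit_of_norm_one {q : ℚ_[p]} (h : ‖q‖ = 1) :
    ∃ a : ℤ_[p]ˣ, ((a : ℤ_[p]) : ℚ_[p]) = q := by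
  set z : ℤ_[p] := ⟨q, le_of_eq h⟩ with hz
  have hz1 : ‖z‖ = 1 := by rw [PadicInt.norm_def]; exact h
  obtain ⟨a, ha⟩ := PadicInt.isUnit_iff.mpr hz1
  exact ⟨a, by rw [ha]⟩

theorem norm_two_eq_one (hp : p ≠ 2) : ‖(2 : ℚ_[p])‖ = 1 := by
  have h1 : ‖(2 : ℚ_[p])‖ ≤ 1 := by
    have := Padic.norm_int_le_one (p := p) 2
    exact_mod_cast this
  rcases lt_or_eq_of_le h1 with h | h
  · exfalso
    have h2 : ((p : ℤ)) ∣ 2 := (Padic.norm_intCast_lt_one_iff (k := 2)).mp (by exact_mod_cast h)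
    have hple : (p : ℤ) ≤ 2 := Int.le_of_dvd (by norm_num) h2
    have h3 := (Fact.out : p.Prime).two_le
    have : p ≤ 2 := by exact_mod_cast hple
    exact hp (le_antisymm this h3)
  · exact h

-- discreteness: norm < 1 implies ≤ p⁻¹, for ℚ_p
theorem norm_lt_one_le {q : ℚ_[p]} (h : ‖q‖ < 1) : ‖q‖ ≤ (p : ℝ)⁻¹ := by
  have := (Padic.norm_le_pow_iff_norm_lt_pow_add_one q (-1)).mpr (by
    simpa using h)
  simpa [zpow_neg, zpow_one] using this

theorem norm_gt_one_ge {q : ℚ_[p]} (h : ¬ ‖q‖ ≤ 1) : (p : ℝ) ≤ ‖q‖ := by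
  by_contra hc
  push_neg at hc
  exact h ((Padic.norm_le_pow_iff_norm_lt_pow_add_one q 0).mpr (by simpa using hc))

theorem base_case (hp : p ≠ 2) (V : Type*) [AddCommGroup V] [Module ℚ_[p] V] [Module ℤ_[p] V]
    [IsScalarTower ℤ_[p] ℚ_[p] V] [FiniteDimensional ℚ_[p] V]
    (hdim : Module.finrank ℚ_[p] V = 1)
    (Q : QuadraticForm ℚ_[p] V) (hQ : (QuadraticMap.polarBilin Q).Nondegenerate)
    (Λ : Submodule ℤ_[p] V)
    (hfull : Submodule.span ℚ_[p] (Λ : Set V) = ⊤)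
    (hself : ∀ v ∈ Λ, ∀ w ∈ Λ, ‖QuadraticMap.polar Q v w‖ ≤ 1)
    (hlen : ∃ u : V, (∀ w ∈ Λ, ‖QuadraticMap.polar Q u w‖ ≤ 1) ∧ u ∉ Λ ∧
      (p : ℤ_[p]) • u ∈ Λ ∧
      ∀ v : V, (∀ w ∈ Λ, ‖QuadraticMap.polar Q v w‖ ≤ 1) →
        ∃ c : ℤ_[p], v - c • u ∈ Λ) :
    ∃ (x : Fin 1 → V) (a : Fin 1 → ℤ_[p]ˣ),
      LinearIndependent ℚ_[p] x ∧
      Submodule.span ℚ_[p] (Set.range x) = ⊤ ∧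
      Λ = Submodule.span ℤ_[p] (Set.range x) ∧
      ∀ i j : Fin 1, QuadraticMap.polar Q (x i) (x j) =
        if i = j then
          (if (i : ℕ) = 0 then (p : ℚ_[p]) * ((a i : ℤ_[p]) : ℚ_[p])
            else ((a i : ℤ_[p]) : ℚ_[p]))
        else 0 := by
  classical
  have hppos : (0:ℝ) < (p:ℝ) := by exact_mod_cast (Fact.out : p.Prime).pos
  have hpQ : ((p:ℚ_[p])) ≠ 0 := by
    exact_mod_cast (Nat.cast_ne_zero (R := ℚ_[p])).mpr (Fact.out : p.Prime).ne_zero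
  have hnormp : ‖(p:ℚ_[p])‖ = (p:ℝ)⁻¹ := Padic.norm_p
  obtain ⟨cb, hmemΛ, hΛspan, hrepr⟩ := latticeBasis hdim Q hQ Λ hfull hself
  set x0 : V := cb 0 with hx0
  have hdecomp : ∀ w : V, w = cb.repr w 0 • x0 := by
    intro w
    conv_lhs => rw [← Basis.sum_repr cb w]
    rw [Fin.sum_univ_one]
  have hmem : ∀ w : V, w ∈ Λ ↔ ‖cb.repr w 0‖ ≤ 1 := by
    intro w
    rw [hrepr w]
    exact ⟨fun h => h 0, fun h i => by rw [Subsingleton.elim i 0]; exact h⟩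
  obtain ⟨u, hu1, hu2, hu3, hu4⟩ := hlen
  set α : ℚ_[p] := cb.repr u 0 with hα
  have hα1 : ¬ ‖α‖ ≤ 1 := fun h => hu2 ((hmem u).mpr h)
  have hαgep : (p:ℝ) ≤ ‖α‖ := norm_gt_one_ge hα1
  have hαlep : ‖α‖ ≤ (p:ℝ) := by
    have h1 : (p : ℤ_[p]) • u ∈ Λ := hu3
    have h2 : (p : ℤ_[p]) • u = (p:ℚ_[p]) • u := by
      rw [← zsmul_q ((p:ℕ) : ℤ_[p]) u]; norm_cast; exact Nat.cast_smul_eq_nsmul _ _ _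
    rw [h2, hmem] at h1
    rw [_root_.map_smul] at h1
    simp only [Finsupp.smul_apply, smul_eq_mul, norm_mul, hnormp] at h1
    calc ‖α‖ = (p:ℝ) * ((p:ℝ)⁻¹ * ‖α‖) := by field_simp
    _ ≤ (p:ℝ) * 1 := by
        apply mul_le_mul_of_nonneg_left h1 (le_of_lt hppos)
    _ = (p:ℝ) := mul_one _
  have hαeq : ‖α‖ = (p:ℝ) := le_antisymm hαlep hαgep
  set q : ℚ_[p] := QuadraticMap.polar Q x0 x0 with hqdef
  have hx0Λ : x0 ∈ Λ := hmemΛ 0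
  have hq1 : ‖q‖ ≤ 1 := hself x0 hx0Λ x0 hx0Λ
  -- q ≠ 0
  have hqne : q ≠ 0 := by
    intro h0
    have : x0 = 0 := by
      apply hQ.1
      intro w
      rw [QuadraticMap.polarBilin_apply_apply]
      conv_lhs => rw [hdecomp w]
      rw [QuadraticMap.polar_smul_right, ← hqdef, h0, smul_zero]
    exact cb.ne_zero 0 this
  -- upper bound ‖q‖ ≤ p⁻¹
  have hq2 : ‖q‖ ≤ (p:ℝ)⁻¹ := by
    have h1 := hu1 x0 hx0Λ
    conv_lhs at h1 => rw [hdecomp u]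
    rw [QuadraticMap.polar_smul_left, smul_eq_mul, norm_mul, hαeq] at h1
    calc ‖q‖ = (p:ℝ)⁻¹ * ((p:ℝ) * ‖q‖) := by field_simp
    _ ≤ (p:ℝ)⁻¹ * 1 := mul_le_mul_of_nonneg_left h1 (by positivity)
    _ = (p:ℝ)⁻¹ := mul_one _
  -- lower bound
  have hq3 : (p:ℝ)⁻¹ ≤ ‖q‖ := by
    by_contra hlow
    push_neg at hlow
    have hqle : ‖q‖ ≤ (p:ℝ)^(-2 : ℤ) := by
      rw [Padic.norm_le_pow_iff_norm_lt_pow_add_one]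
      simpa [zpow_neg, zpow_one] using hlow
    set v : V := ((p:ℚ_[p])^2)⁻¹ • x0 with hv
    have hdual : ∀ w ∈ Λ, ‖QuadraticMap.polar Q v w‖ ≤ 1 := by
      intro w hw
      rw [hv, QuadraticMap.polar_smul_left]
      conv_lhs => rw [hdecomp w]
      rw [QuadraticMap.polar_smul_right, ← hqdef]
      rw [smul_eq_mul, smul_eq_mul, norm_mul, norm_mul, norm_inv, norm_pow, hnormp]
      have hw1 : ‖cb.repr w 0‖ ≤ 1 := (hmem w).mp hw
      have : ‖q‖ * 1 ≥ ‖cb.repr w 0‖ * ‖q‖ := by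
        rw [mul_one, mul_comm]
        exact mul_le_mul_of_nonneg_left hw1 (norm_nonneg q) |>.trans_eq (mul_one _)
      calc ((p:ℝ)⁻¹^2)⁻¹ * (‖cb.repr w 0‖ * ‖q‖)
          ≤ ((p:ℝ)⁻¹^2)⁻¹ * ‖q‖ := by
            apply mul_le_mul_of_nonneg_left _ (by positivity)
            calc ‖cb.repr w 0‖ * ‖q‖ ≤ 1 * ‖q‖ :=
              mul_le_mul_of_nonneg_right hw1 (norm_nonneg q)
            _ = ‖q‖ := one_mul _
        _ ≤ ((p:ℝ)⁻¹^2)⁻¹ * (p:ℝ)^(-2:ℤ) := mul_le_mul_of_nonneg_left hqle (by positivity)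
        _ = 1 := by
            have hz : (p:ℝ)^(-2:ℤ) = ((p:ℝ)^2)⁻¹ := by
              rw [zpow_neg]; norm_cast
            rw [hz]
            field_simp
    obtain ⟨c, hc⟩ := hu4 v hdual
    rw [← zsmul_q c u, hmem] at hc
    rw [hv] at hc
    simp only [_root_.map_sub, _root_.map_smul, Finsupp.sub_apply, Finsupp.smul_apply,
      smul_eq_mul] at hc
    have hx00 : cb.repr x0 0 = 1 := by rw [hx0]; simp
    rw [hx00, mul_one] at hc
    -- norms: ‖(p²)⁻¹‖ = p², ‖c•α‖ ≤ p
    have h1 : ‖((p:ℚ_[p])^2)⁻¹‖ = (p:ℝ)^2 := by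
      rw [norm_inv, norm_pow, hnormp]; field_simp
    have h2 : ‖(c : ℚ_[p]) * α‖ ≤ (p:ℝ) := by
      rw [norm_mul, hαeq]
      calc ‖(c:ℚ_[p])‖ * (p:ℝ) ≤ 1 * (p:ℝ) :=
        mul_le_mul_of_nonneg_right c.2 (le_of_lt hppos)
      _ = (p:ℝ) := one_mul _
    have hne : ‖((p:ℚ_[p])^2)⁻¹‖ ≠ ‖-((c : ℚ_[p]) * α)‖ := by
      rw [norm_neg, h1]
      intro h
      have : (p:ℝ)^2 ≤ (p:ℝ) := h ▸ h2
      nlinarith [hppos, (show (1:ℝ) < (p:ℝ) by exact_mod_cast (Fact.out : p.Prime).one_lt)]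
    have := Padic.add_eq_max_of_ne hne
    rw [← sub_eq_add_neg] at this
    rw [this] at hc
    have : (p:ℝ)^2 ≤ 1 := by
      calc (p:ℝ)^2 = ‖((p:ℚ_[p])^2)⁻¹‖ := h1.symm
      _ ≤ max ‖((p:ℚ_[p])^2)⁻¹‖ ‖-((c : ℚ_[p]) * α)‖ := le_max_left _ _
      _ ≤ 1 := hc
    nlinarith [hppos, (show (1:ℝ) < (p:ℝ) by exact_mod_cast (Fact.out : p.Prime).one_lt)]
  have hqnorm : ‖q‖ = (p:ℝ)⁻¹ := le_antisymm hq2 hq3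
  -- extract unit
  have hq'norm : ‖(p:ℚ_[p])⁻¹ * q‖ = 1 := by
    rw [norm_mul, norm_inv, hnormp, hqnorm]
    field_simp
  obtain ⟨a, ha⟩ := unit_of_norm_one hq'norm
  have hqpa : q = (p : ℚ_[p]) * ((a : ℤ_[p]) : ℚ_[p]) := by
    rw [ha]; field_simp
  refine ⟨⇑cb, fun _ => a, cb.linearIndependent, cb.span_eq, hΛspan, ?_⟩
  intro i j
  rw [Subsingleton.elim i 0, Subsingleton.elim j 0]
  simp only [if_pos rfl]
  rw [show ((0 : Fin 1) : ℕ) = 0 from rfl, if_pos rfl]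
  exact hqpa

theorem step_case (hp : p ≠ 2) (m : ℕ)
    (IH : ∀ (W : Type u) [AddCommGroup W] [Module ℚ_[p] W] [Module ℤ_[p] W]
      [IsScalarTower ℤ_[p] ℚ_[p] W] [FiniteDimensional ℚ_[p] W],
      Module.finrank ℚ_[p] W = m + 1 →
      ∀ (Q : QuadraticForm ℚ_[p] W), (QuadraticMap.polarBilin Q).Nondegenerate →
      ∀ (Λ : Submodule ℤ_[p] W), Submodule.span ℚ_[p] (Λ : Set W) = ⊤ →
      (∀ v ∈ Λ, ∀ w ∈ Λ, ‖QuadraticMap.polar Q v w‖ ≤ 1) →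
      (∃ u : W, (∀ w ∈ Λ, ‖QuadraticMap.polar Q u w‖ ≤ 1) ∧ u ∉ Λ ∧
        (p : ℤ_[p]) • u ∈ Λ ∧
        ∀ v : W, (∀ w ∈ Λ, ‖QuadraticMap.polar Q v w‖ ≤ 1) →
          ∃ c : ℤ_[p], v - c • u ∈ Λ) →
      ∃ (x : Fin (m+1) → W) (a : Fin (m+1) → ℤ_[p]ˣ),
        LinearIndependent ℚ_[p] x ∧
        Submodule.span ℚ_[p] (Set.range x) = ⊤ ∧
        Λ = Submodule.span ℤ_[p] (Set.range x) ∧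
        ∀ i j : Fin (m+1), QuadraticMap.polar Q (x i) (x j) =
          if i = j then
            (if (i : ℕ) = 0 then (p : ℚ_[p]) * ((a i : ℤ_[p]) : ℚ_[p])
              else ((a i : ℤ_[p]) : ℚ_[p]))
          else 0)
    (V : Type u) [AddCommGroup V] [Module ℚ_[p] V] [Module ℤ_[p] V]
    [IsScalarTower ℤ_[p] ℚ_[p] V] [FiniteDimensional ℚ_[p] V]
    (hdim : Module.finrank ℚ_[p] V = m + 2)
    (Q : QuadraticForm ℚ_[p] V) (hQ : (QuadraticMap.polarBilin Q).Nondegenerate)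
    (Λ : Submodule ℤ_[p] V)
    (hfull : Submodule.span ℚ_[p] (Λ : Set V) = ⊤)
    (hself : ∀ v ∈ Λ, ∀ w ∈ Λ, ‖QuadraticMap.polar Q v w‖ ≤ 1)
    (hlen : ∃ u : V, (∀ w ∈ Λ, ‖QuadraticMap.polar Q u w‖ ≤ 1) ∧ u ∉ Λ ∧
      (p : ℤ_[p]) • u ∈ Λ ∧
      ∀ v : V, (∀ w ∈ Λ, ‖QuadraticMap.polar Q v w‖ ≤ 1) →
        ∃ c : ℤ_[p], v - c • u ∈ Λ) :
    ∃ (x : Fin (m+2) → V) (a : Fin (m+2) → ℤ_[p]ˣ),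
      LinearIndependent ℚ_[p] x ∧
      Submodule.span ℚ_[p] (Set.range x) = ⊤ ∧
      Λ = Submodule.span ℤ_[p] (Set.range x) ∧
      ∀ i j : Fin (m+2), QuadraticMap.polar Q (x i) (x j) =
        if i = j then
          (if (i : ℕ) = 0 then (p : ℚ_[p]) * ((a i : ℤ_[p]) : ℚ_[p])
            else ((a i : ℤ_[p]) : ℚ_[p]))
        else 0 := by
  classical
  have hppos : (0:ℝ) < (p:ℝ) := by exact_mod_cast (Fact.out : p.Prime).pos
  have hp1 : (1:ℝ) < (p:ℝ) := by exact_mod_cast (Fact.out : p.Prime).one_lt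
  have hnormp : ‖(p:ℚ_[p])‖ = (p:ℝ)⁻¹ := Padic.norm_p
  obtain ⟨u, hu1, hu2, hu3, hu4⟩ := hlen
  obtain ⟨cb, hmemΛ, hΛspan, hrepr⟩ := latticeBasis hdim Q hQ Λ hfull hself
  -- STEP 1: find a unit vector
  have hexistsv : ∃ v ∈ Λ, ‖QuadraticMap.polar Q v v‖ = 1 := by
    by_contra hcon
    push_neg at hcon
    have hdiag : ∀ y ∈ Λ, ‖QuadraticMap.polar Q y y‖ < 1 :=
      fun y hy => lt_of_le_of_ne (hself y hy y hy) (hcon y hy)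
    have hoff : ∀ y ∈ Λ, ∀ z ∈ Λ, ‖QuadraticMap.polar Q y z‖ ≤ (p:ℝ)⁻¹ := by
      intro y hy z hz
      apply norm_lt_one_le
      have hexp : QuadraticMap.polar Q (y+z) (y+z) =
          QuadraticMap.polar Q y y + QuadraticMap.polar Q y z + QuadraticMap.polar Q y z
            + QuadraticMap.polar Q z z := by
        rw [QuadraticMap.polar_add_left, QuadraticMap.polar_add_right,
          QuadraticMap.polar_add_right, QuadraticMap.polar_comm (⇑Q) z y]
        ring
      have hid : QuadraticMap.polar Q y z * 2 = QuadraticMap.polar Q (y+z) (y+z)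
          + (- QuadraticMap.polar Q y y) + (- QuadraticMap.polar Q z z) := by
        rw [hexp]; ring
      have hn : ‖QuadraticMap.polar Q y z * 2‖ < 1 := by
        rw [hid]
        calc ‖QuadraticMap.polar Q (y+z) (y+z) + (- QuadraticMap.polar Q y y)
              + (- QuadraticMap.polar Q z z)‖
            ≤ max (max ‖QuadraticMap.polar Q (y+z) (y+z)‖ ‖- QuadraticMap.polar Q y y‖)
                ‖- QuadraticMap.polar Q z z‖ := by
              refine le_trans (Padic.nonarchimedean _ _) ?_
              exact max_le_max (Padic.nonarchimedean _ _) le_rfl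
          _ < 1 := by
              rw [norm_neg, norm_neg]
              exact max_lt (max_lt (hdiag _ (add_mem hy hz)) (hdiag y hy)) (hdiag z hz)
      rwa [norm_mul, norm_two_eq_one hp, mul_one] at hn
    -- dual vectors p⁻¹ • cb i
    have hdual : ∀ i : Fin (m+2), ∀ w ∈ Λ, ‖QuadraticMap.polar Q ((p:ℚ_[p])⁻¹ • cb i) w‖ ≤ 1 := by
      intro i w hw
      rw [QuadraticMap.polar_smul_left, smul_eq_mul, norm_mul, norm_inv, hnormp, inv_inv]
      calc (p:ℝ) * ‖QuadraticMap.polar Q (cb i) w‖ ≤ (p:ℝ) * (p:ℝ)⁻¹ :=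
        mul_le_mul_of_nonneg_left (hoff (cb i) (hmemΛ i) w hw) hppos.le
      _ = 1 := by field_simp
    obtain ⟨c0, hc0⟩ := hu4 _ (hdual 0)
    obtain ⟨c1, hc1⟩ := hu4 _ (hdual 1)
    have hwΛ : c1 • ((p:ℚ_[p])⁻¹ • cb 0 - c0 • u) - c0 • ((p:ℚ_[p])⁻¹ • cb 1 - c1 • u) ∈ Λ :=
      sub_mem (Λ.smul_mem c1 hc0) (Λ.smul_mem c0 hc1)
    have hwsimp : c1 • ((p:ℚ_[p])⁻¹ • cb 0 - c0 • u) - c0 • ((p:ℚ_[p])⁻¹ • cb 1 - c1 • u)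
        = ((c1:ℚ_[p]) * (p:ℚ_[p])⁻¹) • cb 0 - ((c0:ℚ_[p]) * (p:ℚ_[p])⁻¹) • cb 1 := by
      rw [← zsmul_q c1 ((p:ℚ_[p])⁻¹ • cb 0 - c0 • u),
          ← zsmul_q c0 ((p:ℚ_[p])⁻¹ • cb 1 - c1 • u),
          ← zsmul_q c0 u, ← zsmul_q c1 u]
      module
    rw [hwsimp] at hwΛ
    have hco : ∀ (i : Fin (m+2)), cb.repr (((c1:ℚ_[p]) * (p:ℚ_[p])⁻¹) • cb 0
        - ((c0:ℚ_[p]) * (p:ℚ_[p])⁻¹) • cb 1) i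
        = ((c1:ℚ_[p]) * (p:ℚ_[p])⁻¹) * (if (0:Fin (m+2)) = i then 1 else 0)
          - ((c0:ℚ_[p]) * (p:ℚ_[p])⁻¹) * (if (1:Fin (m+2)) = i then 1 else 0) := by
      intro i
      rw [_root_.map_sub, _root_.map_smul, _root_.map_smul]
      simp only [Finsupp.sub_apply, Finsupp.smul_apply, smul_eq_mul, Basis.repr_self,
        Finsupp.single_apply]
    have hnc1 : ‖(c1:ℚ_[p])‖ ≤ (p:ℝ)⁻¹ := by
      have h0 := (hrepr _).mp hwΛ 0
      rw [hco 0] at h0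
      rw [if_pos rfl, if_neg (show ¬ (1:Fin (m+2)) = 0 by simp [Fin.one_eq_zero_iff]), mul_one,
        mul_zero, sub_zero] at h0
      rw [norm_mul, norm_inv, hnormp, inv_inv] at h0
      calc ‖(c1:ℚ_[p])‖ = (p:ℝ)⁻¹ * (‖(c1:ℚ_[p])‖ * (p:ℝ)) := by field_simp
      _ ≤ (p:ℝ)⁻¹ * 1 := mul_le_mul_of_nonneg_left h0 (by positivity)
      _ = (p:ℝ)⁻¹ := mul_one _
    have hnc0 : ‖(c0:ℚ_[p])‖ ≤ (p:ℝ)⁻¹ := by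
      have h0 := (hrepr _).mp hwΛ 1
      rw [hco 1] at h0
      rw [if_neg (show ¬ (0:Fin (m+2)) = 1 by simp [Fin.zero_eq_one_iff]), if_pos rfl, mul_one,
        mul_zero, zero_sub, norm_neg] at h0
      rw [norm_mul, norm_inv, hnormp, inv_inv] at h0
      calc ‖(c0:ℚ_[p])‖ = (p:ℝ)⁻¹ * (‖(c0:ℚ_[p])‖ * (p:ℝ)) := by field_simp
      _ ≤ (p:ℝ)⁻¹ * 1 := mul_le_mul_of_nonneg_left h0 (by positivity)
      _ = (p:ℝ)⁻¹ := mul_one _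
    -- c0 • u ∈ Λ
    have hdvd : (p : ℤ_[p]) ∣ c0 := by
      rw [← PadicInt.norm_lt_one_iff_dvd]
      rw [PadicInt.norm_def]
      exact lt_of_le_of_lt hnc0 (by rw [inv_lt_one_iff₀]; right; exact hp1)
    obtain ⟨c0', hc0'⟩ := hdvd
    have hc0u : c0 • u ∈ Λ := by
      rw [hc0', mul_comm, mul_smul]
      exact Λ.smul_mem c0' hu3
    have hfin : (p:ℚ_[p])⁻¹ • cb 0 ∈ Λ := by
      have := add_mem hc0 hc0u
      rwa [sub_add_cancel] at this
    have := (hrepr _).mp hfin 0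
    rw [_root_.map_smul] at this
    simp only [Finsupp.smul_apply, smul_eq_mul, Basis.repr_self] at this
    rw [Finsupp.single_apply, if_pos rfl, mul_one, norm_inv, hnormp, inv_inv] at this
    linarith
  -- STEP 2: split off the unit vector
  obtain ⟨v, hvΛ, hvnorm⟩ := hexistsv
  set q : ℚ_[p] := QuadraticMap.polar Q v v with hq
  have hqne : q ≠ 0 := by
    intro h
    rw [h, norm_zero] at hvnorm
    norm_num at hvnorm
  have hqinv : ‖q⁻¹‖ = 1 := by rw [norm_inv, hvnorm]; norm_num
  set f : V →ₗ[ℚ_[p]] ℚ_[p] := (QuadraticMap.polarBilin Q) v with hf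
  have hfapp : ∀ w, f w = QuadraticMap.polar Q v w := fun w => rfl
  set W : Submodule ℚ_[p] V := LinearMap.ker f with hWdef
  have hmemW : ∀ w, w ∈ W ↔ QuadraticMap.polar Q v w = 0 := fun w => LinearMap.mem_ker
  have hdimW : Module.finrank ℚ_[p] W = m + 1 := by
    have hsurj : Function.Surjective f := by
      intro r
      refine ⟨(r * q⁻¹) • v, ?_⟩
      rw [hfapp, QuadraticMap.polar_smul_right, smul_eq_mul, ← hq]
      field_simp
    have hrn := LinearMap.finrank_range_add_finrank_ker f
    rw [LinearMap.range_eq_top.mpr hsurj, finrank_top, Module.finrank_self, hdim] at hrn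
    rw [← hWdef] at hrn
    omega
  set π : V →ₗ[ℚ_[p]] V := LinearMap.id - LinearMap.smulRight (q⁻¹ • f) v with hπdef
  have hπapp : ∀ w, π w = w - (q⁻¹ * QuadraticMap.polar Q v w) • v := by
    intro w
    simp only [hπdef, LinearMap.sub_apply, LinearMap.id_apply, LinearMap.smulRight_apply,
      LinearMap.smul_apply, smul_eq_mul, hfapp]
  have hπker : ∀ w, QuadraticMap.polar Q v (π w) = 0 := by
    intro w
    rw [hπapp, QuadraticMap.polar_sub_right, QuadraticMap.polar_smul_right, smul_eq_mul, ← hq]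
    field_simp
    ring
  have hπW : ∀ w, π w ∈ W := fun w => (hmemW _).mpr (hπker w)
  have hπfix : ∀ w, QuadraticMap.polar Q v w = 0 → π w = w := by
    intro w h
    rw [hπapp, h, mul_zero, zero_smul, sub_zero]
  have hπΛ : ∀ w ∈ Λ, π w ∈ Λ := by
    intro w hw
    rw [hπapp]
    obtain ⟨z, hz⟩ : ∃ z : ℤ_[p], (z:ℚ_[p]) = q⁻¹ * QuadraticMap.polar Q v w :=
      ⟨⟨_, by rw [norm_mul, hqinv, one_mul]; exact hself v hvΛ w hw⟩, rfl⟩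
    rw [← hz, zsmul_q]
    exact sub_mem hw (Λ.smul_mem z hvΛ)
  have hdecompw : ∀ w : V, w = (q⁻¹ * QuadraticMap.polar Q v w) • v + π w := by
    intro w
    rw [hπapp]
    abel
  set πZ : V →ₗ[ℤ_[p]] V := π.restrictScalars ℤ_[p] with hπZ
  set ΛV : Submodule ℤ_[p] V := Submodule.map πZ Λ with hΛV
  have hΛVmem : ∀ x, x ∈ ΛV ↔ ∃ w ∈ Λ, π w = x := fun x => Submodule.mem_map
  have hΛVΛ : ΛV ≤ Λ := by
    rintro x ⟨w, hw, rfl⟩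
    exact hπΛ w hw
  have hΛVW : ∀ x ∈ ΛV, x ∈ W := by
    rintro x ⟨w, hw, rfl⟩
    exact hπW w
  have hΛVfix : ∀ x ∈ ΛV, π x = x := fun x hx => hπfix x ((hmemW x).mp (hΛVW x hx))
  -- the subspace as a quadratic space
  set Q' : QuadraticForm ℚ_[p] W := Q.comp W.subtype with hQ'def
  have hpolar' : ∀ x y : W, QuadraticMap.polar Q' x y = QuadraticMap.polar Q (x:V) (y:V) := by
    intro x y
    simp [hQ'def, QuadraticMap.polar, QuadraticMap.comp_apply, Submodule.coe_add]
  have hQ'left : ∀ x : W, (∀ y : W, QuadraticMap.polar Q' x y = 0) → x = 0 := by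
    intro x hx
    have hxV : ∀ w : V, QuadraticMap.polar Q (x:V) w = 0 := by
      intro w
      conv_lhs => rw [hdecompw w]
      rw [QuadraticMap.polar_add_right, QuadraticMap.polar_smul_right]
      have h1 : QuadraticMap.polar Q (x:V) v = 0 := by
        rw [QuadraticMap.polar_comm]
        exact (hmemW (x:V)).mp x.2
      have h2 : QuadraticMap.polar Q (x:V) (π w) = 0 := by
        have := hx ⟨π w, hπW w⟩
        rwa [hpolar'] at this
      rw [h1, h2, smul_zero, add_zero]
    have hx0 : (x:V) = 0 := hQ.1 (x:V) (fun w => hxV w)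
    exact Subtype.ext hx0
  have hQ' : (QuadraticMap.polarBilin Q').Nondegenerate := by
    constructor
    · intro x hx
      exact hQ'left x (fun y => hx y)
    · intro y hy
      apply hQ'left y
      intro x
      rw [QuadraticMap.polar_comm]
      exact hy x
  set Λ' : Submodule ℤ_[p] W := Submodule.comap (W.subtype.restrictScalars ℤ_[p]) ΛV with hΛ'def
  have hmemΛ' : ∀ x : W, x ∈ Λ' ↔ (x:V) ∈ ΛV := fun x => Iff.rfl
  have himgΛ' : Subtype.val '' (Λ' : Set W) = (ΛV : Set V) := by
    ext x
    constructor
    · rintro ⟨y, hy, rfl⟩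
      exact hy
    · intro hx
      exact ⟨⟨x, hΛVW x hx⟩, hx, rfl⟩
  have hfull' : Submodule.span ℚ_[p] (Λ' : Set W) = ⊤ := by
    have hspanV : Submodule.span ℚ_[p] (ΛV : Set V) = W := by
      apply le_antisymm
      · rw [Submodule.span_le]
        intro x hx
        exact hΛVW x hx
      · intro w hw
        have h1 : w ∈ Submodule.map π (Submodule.span ℚ_[p] (Λ : Set V)) := by
          rw [hfull]
          exact ⟨w, trivial, hπfix w ((hmemW w).mp hw)⟩
        rw [Submodule.map_span] at h1
        have himg : ⇑π '' (Λ : Set V) = (ΛV : Set V) := by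
          ext x
          constructor
          · rintro ⟨y, hy, rfl⟩
            exact ⟨y, hy, rfl⟩
          · rintro ⟨y, hy, rfl⟩
            exact ⟨y, hy, rfl⟩
        rwa [himg] at h1
    apply Submodule.map_injective_of_injective (Submodule.injective_subtype W)
    rw [Submodule.map_span, Submodule.map_subtype_top]
    rw [show ⇑W.subtype '' (Λ' : Set W) = (ΛV : Set V) from himgΛ']
    exact hspanV
  have hself' : ∀ x ∈ Λ', ∀ y ∈ Λ', ‖QuadraticMap.polar Q' x y‖ ≤ 1 := by
    intro x hx y hy
    rw [hpolar']
    exact hself _ (hΛVΛ ((hmemΛ' x).mp hx)) _ (hΛVΛ ((hmemΛ' y).mp hy))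
  -- the element u' for the subspace
  set u' : W := ⟨π u, hπW u⟩ with hu'def
  have hπu : ∀ w : V, QuadraticMap.polar Q v w = 0 → QuadraticMap.polar Q (π u) w
      = QuadraticMap.polar Q u w := by
    intro w hw
    rw [hπapp, QuadraticMap.polar_sub_left, QuadraticMap.polar_smul_left, smul_eq_mul, hw,
      mul_zero, sub_zero]
  have hu'1 : ∀ w' ∈ Λ', ‖QuadraticMap.polar Q' u' w'‖ ≤ 1 := by
    intro w' hw'
    rw [hpolar', hu'def]
    rw [hπu _ ((hmemW _).mp (hΛVW _ ((hmemΛ' w').mp hw')))]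
    exact hu1 _ (hΛVΛ ((hmemΛ' w').mp hw'))
  have hu'2 : u' ∉ Λ' := by
    intro h
    have hπuΛ : π u ∈ Λ := hΛVΛ ((hmemΛ' u').mp h)
    obtain ⟨z, hz⟩ : ∃ z : ℤ_[p], (z:ℚ_[p]) = q⁻¹ * QuadraticMap.polar Q v u := by
      refine ⟨⟨_, ?_⟩, rfl⟩
      rw [norm_mul, hqinv, one_mul, QuadraticMap.polar_comm]
      exact hu1 v hvΛ
    apply hu2
    have := hdecompw u
    rw [← hz, zsmul_q] at this
    rw [this]
    exact add_mem (Λ.smul_mem z hvΛ) hπuΛ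
  have hu'3 : (p : ℤ_[p]) • u' ∈ Λ' := by
    rw [hmemΛ']
    have hcoe : ((((p:ℤ_[p])) • u' : W) : V) = πZ ((p:ℤ_[p]) • u) := by
      rw [_root_.map_smul]
      simp only [SetLike.val_smul_of_tower, hu'def]
      rfl
    rw [hcoe]
    exact Submodule.mem_map_of_mem hu3
  have hu'4 : ∀ v0 : W, (∀ w ∈ Λ', ‖QuadraticMap.polar Q' v0 w‖ ≤ 1) →
      ∃ c : ℤ_[p], v0 - c • u' ∈ Λ' := by
    intro v0 hdual0
    have hv0v : QuadraticMap.polar Q (v0:V) v = 0 := by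
      rw [QuadraticMap.polar_comm]
      exact (hmemW (v0:V)).mp v0.2
    have hglobal : ∀ w ∈ Λ, ‖QuadraticMap.polar Q (v0:V) w‖ ≤ 1 := by
      intro w hw
      have heq : QuadraticMap.polar Q (v0:V) w = QuadraticMap.polar Q (v0:V) (π w) := by
        conv_lhs => rw [hdecompw w]
        rw [QuadraticMap.polar_add_right, QuadraticMap.polar_smul_right, hv0v, smul_zero,
          zero_add]
      rw [heq, ← hpolar' v0 ⟨π w, hπW w⟩]
      exact hdual0 _ ((hmemΛ' _).mpr ⟨w, hw, rfl⟩)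
    obtain ⟨c, hc⟩ := hu4 (v0:V) hglobal
    refine ⟨c, ?_⟩
    rw [hmemΛ']
    have hv0v' : QuadraticMap.polar Q v (v0:V) = 0 := (hmemW (v0:V)).mp v0.2
    have hcoe : ((v0 - c • u' : W) : V) = πZ ((v0:V) - c • u) := by
      have h1 : πZ ((v0:V) - c • u) = πZ (v0:V) - c • πZ u := by
        rw [_root_.map_sub, _root_.map_smul]
      rw [h1]
      have h2 : πZ (v0:V) = (v0:V) := hπfix _ hv0v'
      rw [h2]
      simp only [Submodule.coe_sub, SetLike.val_smul_of_tower, hu'def]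
      rfl
    rw [hcoe]
    exact Submodule.mem_map_of_mem hc
  -- apply the induction hypothesis
  obtain ⟨x'', a'', hli'', hspan'', hΛ'', hgram''⟩ :=
    IH W hdimW Q' hQ' Λ' hfull' hself' ⟨u', hu'1, hu'2, hu'3, hu'4⟩
  -- assemble
  obtain ⟨av, hav⟩ := unit_of_norm_one (show ‖q‖ = 1 from by rw [hq] at hvnorm ⊢; exact hvnorm)
  set x : Fin (m+2) → V := Fin.snoc (fun i => ((x'' i : W) : V)) v with hx
  set a : Fin (m+2) → ℤ_[p]ˣ := Fin.snoc a'' av with ha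
  have hxc : ∀ i : Fin (m+1), x (Fin.castSucc i) = ((x'' i : W) : V) := by
    intro i
    rw [hx]
    exact Fin.snoc_castSucc _ _ _
  have hxl : x (Fin.last (m+1)) = v := by
    rw [hx]
    exact Fin.snoc_last _ _
  have hcoex : LinearIndependent ℚ_[p] (fun i => ((x'' i : W) : V)) :=
    hli''.map' (W.subtype) (Submodule.ker_subtype W)
  have hspancoe : Submodule.span ℚ_[p] (Set.range (fun i => ((x'' i : W) : V))) = W := by
    have h1 : Set.range (fun i => ((x'' i : W) : V)) = ⇑W.subtype '' (Set.range x'') := by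
      rw [← Set.range_comp]
      rfl
    rw [h1, ← Submodule.map_span, hspan'', Submodule.map_subtype_top]
  have hvnotin : v ∉ Submodule.span ℚ_[p] (Set.range (fun i => ((x'' i : W) : V))) := by
    rw [hspancoe]
    intro h
    rw [hmemW] at h
    rw [← hq] at h
    exact hqne h
  have hli : LinearIndependent ℚ_[p] x := by
    rw [hx]
    exact linearIndependent_fin_snoc.mpr ⟨hcoex, hvnotin⟩
  have hspanx : Submodule.span ℚ_[p] (Set.range x) = ⊤ := by
    rw [eq_top_iff]
    intro w _
    have hvmem : v ∈ Submodule.span ℚ_[p] (Set.range x) :=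
      Submodule.subset_span ⟨Fin.last (m+1), hxl⟩
    have hWle : W ≤ Submodule.span ℚ_[p] (Set.range x) := by
      rw [← hspancoe, Submodule.span_le]
      intro y hy
      apply Submodule.subset_span
      obtain ⟨i, rfl⟩ := hy
      exact ⟨Fin.castSucc i, hxc i⟩
    have hw2 : (q⁻¹ * QuadraticMap.polar Q v w) • v + π w ∈ Submodule.span ℚ_[p] (Set.range x) :=
      Submodule.add_mem _ (Submodule.smul_mem _ _ hvmem) (hWle (hπW w))
    rwa [← hdecompw w] at hw2
  have hΛx : Λ = Submodule.span ℤ_[p] (Set.range x) := by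
    apply le_antisymm
    · intro w hw
      obtain ⟨z, hz⟩ : ∃ z : ℤ_[p], (z:ℚ_[p]) = q⁻¹ * QuadraticMap.polar Q v w :=
        ⟨⟨_, by rw [norm_mul, hqinv, one_mul]; exact hself v hvΛ w hw⟩, rfl⟩
      have hvmem : v ∈ Submodule.span ℤ_[p] (Set.range x) :=
        Submodule.subset_span ⟨Fin.last (m+1), hxl⟩
      have hπwmem : π w ∈ Submodule.span ℤ_[p] (Set.range x) := by
        have h1 : π w ∈ ΛV := ⟨w, hw, rfl⟩
        have h2 : (ΛV : Set V) ⊆ (Submodule.span ℤ_[p] (Set.range x) : Submodule ℤ_[p] V) := by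
          rw [← himgΛ']
          rintro y ⟨y', hy', rfl⟩
          rw [hΛ''] at hy'
          have h3 : Submodule.map (W.subtype.restrictScalars ℤ_[p])
              (Submodule.span ℤ_[p] (Set.range x'')) ≤ Submodule.span ℤ_[p] (Set.range x) := by
            rw [Submodule.map_span, Submodule.span_le]
            rintro z ⟨z', ⟨i, rfl⟩, rfl⟩
            apply Submodule.subset_span
            exact ⟨Fin.castSucc i, hxc i⟩
          exact h3 (Submodule.mem_map_of_mem hy')
        exact h2 h1
      have hdw := hdecompw w
      rw [← hz, zsmul_q] at hdw
      rw [hdw]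
      exact Submodule.add_mem _ (Submodule.smul_mem _ _ hvmem) hπwmem
    · rw [Submodule.span_le]
      rintro y ⟨i, rfl⟩
      induction i using Fin.lastCases with
      | last =>
        rw [hxl]
        exact hvΛ
      | cast i =>
        rw [hxc]
        apply hΛVΛ
        rw [← hmemΛ']
        rw [hΛ'']
        exact Submodule.subset_span ⟨i, rfl⟩
  refine ⟨x, a, hli, hspanx, hΛx, ?_⟩
  intro i j
  induction i using Fin.lastCases with
  | last =>
    induction j using Fin.lastCases with
    | last =>
      rw [hxl, if_pos rfl, if_neg (by simp [Fin.val_last]), ha, Fin.snoc_last, hav, ← hq]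
    | cast j =>
      rw [hxl, hxc, if_neg (by simp [(Fin.castSucc_lt_last j).ne'])]
      exact (hmemW _).mp (x'' j).2
  | cast i =>
    induction j using Fin.lastCases with
    | last =>
      rw [hxl, hxc, if_neg (Fin.castSucc_lt_last i).ne]
      rw [QuadraticMap.polar_comm]
      exact (hmemW _).mp (x'' i).2
    | cast j =>
      rw [hxc, hxc, ← hpolar', hgram'' i j]
      by_cases hij : i = j
      · subst hij
        rw [if_pos rfl, if_pos rfl]
        simp only [ha, Fin.snoc_castSucc, Fin.coe_castSucc]
      · rw [if_neg hij, if_neg (fun h => hij (Fin.castSucc_inj.mp h))]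


theorem aux_diag (hp : p ≠ 2) (m : ℕ) :
    ∀ (V : Type u) [AddCommGroup V] [Module ℚ_[p] V] [Module ℤ_[p] V]
      [IsScalarTower ℤ_[p] ℚ_[p] V] [FiniteDimensional ℚ_[p] V],
    Module.finrank ℚ_[p] V = m + 1 →
    ∀ (Q : QuadraticForm ℚ_[p] V), (QuadraticMap.polarBilin Q).Nondegenerate →
    ∀ (Λ : Submodule ℤ_[p] V), Submodule.span ℚ_[p] (Λ : Set V) = ⊤ →
    (∀ v ∈ Λ, ∀ w ∈ Λ, ‖QuadraticMap.polar Q v w‖ ≤ 1) →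
    (∃ u : V, (∀ w ∈ Λ, ‖QuadraticMap.polar Q u w‖ ≤ 1) ∧ u ∉ Λ ∧
      (p : ℤ_[p]) • u ∈ Λ ∧
      ∀ v : V, (∀ w ∈ Λ, ‖QuadraticMap.polar Q v w‖ ≤ 1) →
        ∃ c : ℤ_[p], v - c • u ∈ Λ) →
    ∃ (x : Fin (m+1) → V) (a : Fin (m+1) → ℤ_[p]ˣ),
      LinearIndependent ℚ_[p] x ∧
      Submodule.span ℚ_[p] (Set.range x) = ⊤ ∧
      Λ = Submodule.span ℤ_[p] (Set.range x) ∧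
      ∀ i j : Fin (m+1), QuadraticMap.polar Q (x i) (x j) =
        if i = j then
          (if (i : ℕ) = 0 then (p : ℚ_[p]) * ((a i : ℤ_[p]) : ℚ_[p])
            else ((a i : ℤ_[p]) : ℚ_[p]))
        else 0 := by
  induction m with
  | zero =>
    intro V _ _ _ _ _ hdim Q hQ Λ hfull hself hlen
    exact base_case hp V hdim Q hQ Λ hfull hself hlen
  | succ m ih =>
    intro V _ _ _ _ _ hdim Q hQ Λ hfull hself hlen
    exact step_case hp m ih V hdim Q hQ Λ hfull hself hlen

end Stmt2Aux

open Stmt2Aux in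
/-- If `(V, Q)` is a nondegenerate quadratic space of dimension `n` over `ℚ_p`
(`p` odd) admitting an almost self-dual lattice `Λ` (i.e. `Λ ⊆ Λ^∨` and
`length (Λ^∨/Λ) = 1`, the latter encoded by the existence of `u ∈ Λ^∨` with `u ∉ Λ`,
`p • u ∈ Λ` and `Λ^∨ = Λ + ℤ_p u`; membership in the dual lattice `Λ^∨` is encoded by
`‖[v,w]‖ ≤ 1` for all `w ∈ Λ`), then there exist a `ℚ_p`-basis `x` of `V` and units
`a i ∈ ℤ_p^×` such that `Λ` is the `ℤ_p`-span of `x` and the Gram matrix of the bilinear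
form `[·,·] = polar Q` is `diag(p·a₀, a₁, …, a_{n-1})`. -/
theorem stmt_2 (p : ℕ) [Fact p.Prime] (hp : p ≠ 2) (n : ℕ) (hn : 1 ≤ n)
    (V : Type*) [AddCommGroup V] [Module ℚ_[p] V] [Module ℤ_[p] V]
    [IsScalarTower ℤ_[p] ℚ_[p] V] [FiniteDimensional ℚ_[p] V]
    (hdim : Module.finrank ℚ_[p] V = n)
    (Q : QuadraticForm ℚ_[p] V) (hQ : (QuadraticMap.polarBilin Q).Nondegenerate)
    (Λ : Submodule ℤ_[p] V)
    (hfull : Submodule.span ℚ_[p] (Λ : Set V) = ⊤)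
    (hself : ∀ v ∈ Λ, ∀ w ∈ Λ, ‖QuadraticMap.polar Q v w‖ ≤ 1)
    (hlen : ∃ u : V, (∀ w ∈ Λ, ‖QuadraticMap.polar Q u w‖ ≤ 1) ∧ u ∉ Λ ∧
      (p : ℤ_[p]) • u ∈ Λ ∧
      ∀ v : V, (∀ w ∈ Λ, ‖QuadraticMap.polar Q v w‖ ≤ 1) →
        ∃ c : ℤ_[p], v - c • u ∈ Λ) :
    ∃ (x : Fin n → V) (a : Fin n → ℤ_[p]ˣ),
      LinearIndependent ℚ_[p] x ∧
      Submodule.span ℚ_[p] (Set.range x) = ⊤ ∧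
      Λ = Submodule.span ℤ_[p] (Set.range x) ∧
      ∀ i j : Fin n, QuadraticMap.polar Q (x i) (x j) =
        if i = j then
          (if (i : ℕ) = 0 then (p : ℚ_[p]) * ((a i : ℤ_[p]) : ℚ_[p])
            else ((a i : ℤ_[p]) : ℚ_[p]))
        else 0 := by
  obtain ⟨m, rfl⟩ : ∃ m, n = m + 1 := ⟨n-1, (Nat.succ_pred_eq_of_pos hn).symm⟩
  exact aux_diag hp m V hdim Q hQ Λ hfull hself hlen
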